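/- For every x ∈ ℝ^n (n ≥ 1) and every perturbation e ∈ ℝ^n, the normwise relative change in the softmax function satisfies ‖g(x + e) − g(x)‖_∞ / ‖g(x)‖_∞ ≤ n ‖e‖_∞; in particular the ∞-norm relative condition number of softmax at x is at most n ‖x‖_∞. -/

import Mathlib

open Finset Real

lemma softmax_component_lip (n : ℕ) (x e : Fin n → ℝ) (j : Fin n) :
    |Real.exp (x j + e j) / ∑ i, Real.exp (x i + e i)
      - Real.exp (x j) / ∑ i, Real.exp (x i)| ≤ ‖e‖ := by
  set N : ℝ → ℝ := fun s => Real.exp (x j + s * e j) with hN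
  set D : ℝ → ℝ := fun s => ∑ i, Real.exp (x i + s * e i) with hDdef
  have hD : ∀ s : ℝ, 0 < D s := fun s =>
    Finset.sum_pos (fun i _ => Real.exp_pos _) ⟨j, Finset.mem_univ j⟩
  set f : ℝ → ℝ := fun s => N s / D s with hf
  set f' : ℝ → ℝ := fun s =>
    (N s * e j * D s - N s * ∑ i, Real.exp (x i + s * e i) * e i) / D s ^ 2 with hf'
  have hderiv : ∀ s : ℝ, HasDerivAt f (f' s) s := by
    intro s
    have hNd : HasDerivAt N (Real.exp (x j + s * e j) * e j) s := by
      have h1 : HasDerivAt (fun s : ℝ => x j + s * e j) (e j) s := by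
        simpa using (hasDerivAt_mul_const (e j)).const_add (x j)
      simpa using h1.exp
    have hDd : HasDerivAt D (∑ i, Real.exp (x i + s * e i) * e i) s := by
      apply HasDerivAt.fun_sum
      intro i _
      have h1 : HasDerivAt (fun s : ℝ => x i + s * e i) (e i) s := by
        simpa using (hasDerivAt_mul_const (e i)).const_add (x i)
      simpa using h1.exp
    exact hNd.div hDd (hD s).ne'
  have hbound : ∀ s : ℝ, |f' s| ≤ ‖e‖ := by
    intro s
    have he : ∀ i : Fin n, |e i| ≤ ‖e‖ := by
      intro i
      simpa [Real.norm_eq_abs] using norm_le_pi_norm e i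
    have hnum : N s * e j * D s - N s * ∑ i, Real.exp (x i + s * e i) * e i
        = N s * ∑ i ∈ Finset.univ.erase j, (e j - e i) * Real.exp (x i + s * e i) := by
      have : (∑ i : Fin n, (e j - e i) * Real.exp (x i + s * e i))
          = ∑ i ∈ Finset.univ.erase j, (e j - e i) * Real.exp (x i + s * e i) := by
        rw [← Finset.add_sum_erase _ _ (Finset.mem_univ j)]
        simp
      rw [← this]
      rw [Finset.mul_sum]
      rw [Finset.mul_sum, Finset.mul_sum]
      rw [← Finset.sum_sub_distrib]
      congr 1
      ext i
      ring
    have hsum : |∑ i ∈ Finset.univ.erase j, (e j - e i) * Real.exp (x i + s * e i)|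
        ≤ 2 * ‖e‖ * (D s - N s) := by
      have h1 : |∑ i ∈ Finset.univ.erase j, (e j - e i) * Real.exp (x i + s * e i)|
          ≤ ∑ i ∈ Finset.univ.erase j, 2 * ‖e‖ * Real.exp (x i + s * e i) := by
        refine (Finset.abs_sum_le_sum_abs _ _).trans (Finset.sum_le_sum fun i _ => ?_)
        rw [abs_mul, abs_of_pos (Real.exp_pos _)]
        have : |e j - e i| ≤ 2 * ‖e‖ := by
          calc |e j - e i| ≤ |e j| + |e i| := abs_sub _ _
            _ ≤ 2 * ‖e‖ := by linarith [he j, he i]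
        exact mul_le_mul_of_nonneg_right this (Real.exp_pos _).le
      have h2 : ∑ i ∈ Finset.univ.erase j, 2 * ‖e‖ * Real.exp (x i + s * e i)
          = 2 * ‖e‖ * (D s - N s) := by
        rw [← Finset.mul_sum, Finset.sum_erase_eq_sub (Finset.mem_univ j)]
      rw [h2] at h1
      exact h1
    have hNpos : 0 < N s := Real.exp_pos _
    have hND : N s ≤ D s := Finset.single_le_sum (f := fun i => Real.exp (x i + s * e i)) (fun i _ => (Real.exp_pos _).le) (Finset.mem_univ j)
    simp only [hf']
    rw [hnum, abs_div, abs_mul, abs_of_pos hNpos, abs_of_pos (pow_pos (hD s) 2)]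
    rw [div_le_iff₀ (pow_pos (hD s) 2)]
    have : N s * |∑ i ∈ Finset.univ.erase j, (e j - e i) * Real.exp (x i + s * e i)|
        ≤ N s * (2 * ‖e‖ * (D s - N s)) := mul_le_mul_of_nonneg_left hsum hNpos.le
    refine this.trans ?_
    nlinarith [sq_nonneg (D s - 2 * N s), norm_nonneg e, hD s, hNpos]
  have key := norm_image_sub_le_of_norm_deriv_le_segment'
    (f' := f') (fun s _ => (hderiv s).hasDerivWithinAt)
    (fun s _ => by simpa [Real.norm_eq_abs] using hbound s)
    1 (Set.right_mem_Icc.mpr zero_le_one)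
  simp only [hf, hN, hDdef, one_mul, zero_mul, add_zero, mul_one, sub_zero,
    Real.norm_eq_abs] at key
  simpa using key


/-- Normwise relative sensitivity of softmax: with
`g x = fun j => exp (x j) / ∑ i, exp (x i)` on `Fin n → ℝ` (`n ≥ 1`),
`‖g (x + e) - g x‖_∞ / ‖g x‖_∞ ≤ n ‖e‖_∞` for every perturbation `e`; in particular, for
every `ε > 0` and every `e` with `‖e‖_∞ ≤ ε ‖x‖_∞`, the relative change per unit `ε` is at
most `n ‖x‖_∞`, so the ∞-norm relative condition number of softmax at `x` is at most
`n ‖x‖_∞`. (The norm on `Fin n → ℝ` is the sup norm.) -/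
theorem softmax_relative_condition_bound (n : ℕ) (hn : 1 ≤ n) (x : Fin n → ℝ) :
    (∀ e : Fin n → ℝ,
      ‖(fun j => Real.exp (x j + e j) / ∑ i, Real.exp (x i + e i))
          - (fun j => Real.exp (x j) / ∑ i, Real.exp (x i))‖
        / ‖fun j => Real.exp (x j) / ∑ i, Real.exp (x i)‖
        ≤ n * ‖e‖) ∧
    ∀ ε : ℝ, 0 < ε → ∀ e : Fin n → ℝ, ‖e‖ ≤ ε * ‖x‖ →
      ‖(fun j => Real.exp (x j + e j) / ∑ i, Real.exp (x i + e i))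
          - (fun j => Real.exp (x j) / ∑ i, Real.exp (x i))‖
        / (ε * ‖fun j => Real.exp (x j) / ∑ i, Real.exp (x i)‖)
        ≤ n * ‖x‖ := by
  set g : Fin n → ℝ := fun j => Real.exp (x j) / ∑ i, Real.exp (x i) with hg
  have hS : 0 < ∑ i, Real.exp (x i) :=
    Finset.sum_pos (fun i _ => Real.exp_pos _)
      (Finset.univ_nonempty_iff.mpr (Fin.pos_iff_nonempty.mp hn))
  have hsum1 : ∑ j, g j = 1 := by
    rw [hg, ← Finset.sum_div, div_self hS.ne']
  have hglb : 1 / n ≤ ‖g‖ := by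
    obtain ⟨j, hj⟩ : ∃ j : Fin n, 1 / (n : ℝ) ≤ g j := by
      by_contra h
      push_neg at h
      have : (∑ j, g j) < ∑ j : Fin n, 1 / (n : ℝ) :=
        Finset.sum_lt_sum_of_nonempty (Finset.univ_nonempty_iff.mpr (Fin.pos_iff_nonempty.mp hn))
          (fun j _ => h j)
      rw [hsum1] at this
      simp only [Finset.sum_const, Finset.card_univ, Fintype.card_fin, nsmul_eq_mul] at this
      rw [mul_one_div, div_self (by positivity : (n:ℝ) ≠ 0)] at this
      exact lt_irrefl _ this
    calc (1:ℝ)/n ≤ g j := hj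
      _ ≤ |g j| := le_abs_self _
      _ ≤ ‖g‖ := by simpa [Real.norm_eq_abs] using norm_le_pi_norm g j
  have hgpos : 0 < ‖g‖ := lt_of_lt_of_le (by positivity) hglb
  have hnormg : 1 ≤ (n : ℝ) * ‖g‖ := by
    rw [div_le_iff₀ (by positivity : (0:ℝ) < (n:ℝ))] at hglb
    linarith [hglb]
  have hdiff : ∀ e : Fin n → ℝ,
      ‖(fun j => Real.exp (x j + e j) / ∑ i, Real.exp (x i + e i)) - g‖ ≤ ‖e‖ := by
    intro e
    rw [pi_norm_le_iff_of_nonneg (norm_nonneg e)]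
    intro j
    simpa [Real.norm_eq_abs, hg] using softmax_component_lip n x e j
  constructor
  · intro e
    rw [div_le_iff₀ hgpos]
    calc ‖_ - g‖ ≤ ‖e‖ := hdiff e
      _ = 1 * ‖e‖ := (one_mul _).symm
      _ ≤ ((n:ℝ) * ‖g‖) * ‖e‖ := mul_le_mul_of_nonneg_right hnormg (norm_nonneg e)
      _ = (n:ℝ) * ‖e‖ * ‖g‖ := by ring
  · intro ε hε e he
    rw [div_le_iff₀ (by positivity)]
    calc ‖_ - g‖ ≤ ‖e‖ := hdiff e
      _ ≤ ε * ‖x‖ := he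
      _ = ε * ‖x‖ * 1 := (mul_one _).symm
      _ ≤ ε * ‖x‖ * ((n:ℝ) * ‖g‖) := by
          apply mul_le_mul_of_nonneg_left hnormg
          positivity
      _ = (n:ℝ) * ‖x‖ * (ε * ‖g‖) := by ring
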